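/- arXiv:2509.08926 — 2 statements merged into one kernel-verified Lean document; each statement's English description precedes it below -/
import Mathlib

section
/- With the setup as before and tₙ = 1 − a₁ − n for n a nonnegative integer, the residue Rₙ = lim_{t→tₙ⁺}(t−tₙ)·m(t) equals π·Γ(a₁+b₁)/Γ(a₁) · (1/Γ(b₁−n)) · (−1)ⁿ/n!, provided a₁ − a₂ is not an integer, b₁ is not a positive integer, and the second mixture component's Mellin transform is finite at tₙ. -/
open Filter Topology

lemma continuous_inv_gamma : Continuous fun s : ℝ => (Real.Gamma s)⁻¹ := by
  have h : ∀ s : ℝ, (Real.Gamma s)⁻¹ = ((Complex.Gamma (s : ℂ))⁻¹).re := by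
    intro s
    rw [Complex.Gamma_ofReal, ← Complex.ofReal_inv, Complex.ofReal_re]
  simp_rw [h]
  exact Complex.continuous_re.comp
    (Complex.differentiable_one_div_Gamma.continuous.comp Complex.continuous_ofReal)

lemma gamma_residue (n : ℕ) :
    Tendsto (fun s : ℝ => (s + n) * Real.Gamma s) (𝓝[≠] (-(n : ℝ)))
      (𝓝 ((-1 : ℝ) ^ n / n.factorial)) := by
  induction n with
  | zero =>
      simp only [Nat.cast_zero, add_zero, neg_zero, Nat.factorial_zero, pow_zero, Nat.cast_one,
        div_one]
      have hc : Tendsto (fun s : ℝ => Real.Gamma (s + 1)) (𝓝 (0 : ℝ)) (𝓝 1) := by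
        have h1 : ContinuousAt Real.Gamma ((0 : ℝ) + 1) := by
          rw [zero_add]
          refine (Real.differentiableAt_Gamma ?_).continuousAt
          intro m
          have : (0 : ℝ) ≤ m := Nat.cast_nonneg m
          intro h; linarith
        have h2 : Tendsto (fun s : ℝ => s + 1) (𝓝 (0:ℝ)) (𝓝 ((0:ℝ) + 1)) := by
          have := (continuous_id.add (continuous_const : Continuous fun _ : ℝ => (1:ℝ))).tendsto
            (0:ℝ)
          simpa [Pi.add_def] using this
        have hc := h1.tendsto.comp h2
        simpa [Function.comp_def, Real.Gamma_one] using hc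
      refine (hc.mono_left nhdsWithin_le_nhds).congr' ?_
      filter_upwards [self_mem_nhdsWithin] with s hs
      have hs' : s ≠ 0 := by simpa using hs
      exact Real.Gamma_add_one hs'
  | succ n ih =>
      have hne : (-(((n : ℝ)) + 1)) ≠ (0 : ℝ) := by
        have : (0:ℝ) < (n : ℝ) + 1 := by positivity
        linarith
      have hmap : Tendsto (fun s : ℝ => s + 1) (𝓝[≠] (-((n : ℝ) + 1))) (𝓝[≠] (-(n : ℝ))) := by
        apply tendsto_nhdsWithin_of_tendsto_nhds_of_eventually_within
        · have : Tendsto (fun s : ℝ => s + 1) (𝓝 (-((n : ℝ) + 1))) (𝓝 (-((n : ℝ) + 1) + 1)) :=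
            (continuous_id.add continuous_const).continuousAt
          have h' : -((n : ℝ) + 1) + 1 = -(n : ℝ) := by ring
          rw [h'] at this
          exact this.mono_left nhdsWithin_le_nhds
        · filter_upwards [self_mem_nhdsWithin] with s hs h
          simp only [Set.mem_singleton_iff] at h
          exact hs (by simp only [Set.mem_compl_iff, Set.mem_singleton_iff, not_not]; linarith)
      have h1 : Tendsto (fun s : ℝ => ((s + 1) + n) * Real.Gamma (s + 1))
          (𝓝[≠] (-((n : ℝ) + 1))) (𝓝 ((-1 : ℝ) ^ n / n.factorial)) := ih.comp hmap
      have h2 : Tendsto (fun s : ℝ => s⁻¹) (𝓝[≠] (-((n : ℝ) + 1)))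
          (𝓝 (-((n : ℝ) + 1))⁻¹) :=
        ((continuousAt_inv₀ hne).tendsto).mono_left nhdsWithin_le_nhds
      have key := h1.mul h2
      have hev : ∀ᶠ s in 𝓝[≠] (-((n : ℝ) + 1)), s ≠ 0 := by
        apply eventually_nhdsWithin_of_eventually_nhds
        exact eventually_ne_nhds hne
      have heq : Tendsto (fun s : ℝ => (s + ((n : ℝ) + 1)) * Real.Gamma s)
          (𝓝[≠] (-((n : ℝ) + 1))) (𝓝 ((-1 : ℝ) ^ n / n.factorial * (-((n : ℝ) + 1))⁻¹)) := by
        refine key.congr' ?_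
        filter_upwards [hev] with s hs
        rw [Real.Gamma_add_one hs]
        field_simp
        ring
      have hval : (-1 : ℝ) ^ n / n.factorial * (-((n : ℝ) + 1))⁻¹
          = (-1 : ℝ) ^ (n + 1) / (n + 1).factorial := by
        have hfac : ((n + 1).factorial : ℝ) = ((n : ℝ) + 1) * n.factorial := by
          push_cast [Nat.factorial_succ]; ring
        have hinv : (-((n : ℝ) + 1))⁻¹ = (-1 : ℝ) / ((n : ℝ) + 1) := by
          rw [neg_div, one_div, inv_neg]
        rw [hfac, pow_succ, hinv, div_mul_div_comm, mul_comm ((n.factorial : ℝ)) _]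
      rw [hval] at heq
      refine heq.congr' ?_ |>.mono_left (le_of_eq ?_)
      · filter_upwards with s
        push_cast
        ring_nf
      · push_cast
        ring_nf

theorem residue_Rn (π₀ a₁ b₁ a₂ b₂ : ℝ) (n : ℕ)
    (hπ : π₀ ∈ Set.Ioo (0:ℝ) 1)
    (ha₁ : 0 < a₁) (hb₁ : 0 < b₁) (ha₂ : 0 < a₂) (hb₂ : 0 < b₂)
    (hint : ¬ ∃ m : ℤ, a₁ - a₂ = (m : ℝ))
    (hb₁ni : ¬ ∃ k : ℕ, b₁ = (k : ℝ) + 1)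
    (hfin : ∀ k : ℕ, (1 - a₁ - (n : ℝ)) + a₂ - 1 ≠ -(k : ℝ))
    (m : ℝ → ℝ)
    (hm : ∀ t, m t =
      π₀ * (Real.Gamma (t + a₁ - 1) * Real.Gamma (a₁ + b₁) /
        (Real.Gamma (t + a₁ + b₁ - 1) * Real.Gamma a₁)) +
      (1 - π₀) * (Real.Gamma (t + a₂ - 1) * Real.Gamma (a₂ + b₂) /
        (Real.Gamma (t + a₂ + b₂ - 1) * Real.Gamma a₂))) :
    Filter.Tendsto (fun t => (t - (1 - a₁ - (n : ℝ))) * m t)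
      (nhdsWithin (1 - a₁ - (n : ℝ)) (Set.Ioi (1 - a₁ - (n : ℝ))))
      (nhds (π₀ * Real.Gamma (a₁ + b₁) / Real.Gamma a₁ *
        (1 / Real.Gamma (b₁ - (n : ℝ))) * ((-1 : ℝ) ^ n / n.factorial))) := by
  set t₀ : ℝ := 1 - a₁ - (n : ℝ) with ht₀
  set l : Filter ℝ := 𝓝[>] t₀ with hl
  have hl_le : l ≤ 𝓝 t₀ := nhdsWithin_le_nhds
  have hc1 : Continuous fun t : ℝ => t + a₁ - 1 :=
    (continuous_id.add continuous_const).sub continuous_const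
  have hc1' : Continuous fun t : ℝ => t + a₁ + b₁ - 1 :=
    ((continuous_id.add continuous_const).add continuous_const).sub continuous_const
  have hc2 : Continuous fun t : ℝ => t + a₂ - 1 :=
    (continuous_id.add continuous_const).sub continuous_const
  have hc2' : Continuous fun t : ℝ => t + a₂ + b₂ - 1 :=
    ((continuous_id.add continuous_const).add continuous_const).sub continuous_const
  -- map t ↦ t + a₁ - 1 into punctured nbhd of -n
  have hmap : Tendsto (fun t : ℝ => t + a₁ - 1) l (𝓝[≠] (-(n : ℝ))) := by
    apply tendsto_nhdsWithin_of_tendsto_nhds_of_eventually_within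
    · have h1 := (hc1.tendsto t₀).mono_left hl_le
      have h' : t₀ + a₁ - 1 = -(n : ℝ) := by rw [ht₀]; ring
      rw [h'] at h1
      exact h1
    · filter_upwards [self_mem_nhdsWithin] with t ht
      simp only [Set.mem_Ioi] at ht
      simp only [Set.mem_compl_iff, Set.mem_singleton_iff]
      intro h
      have : t = t₀ := by rw [ht₀]; linarith
      exact ne_of_gt ht this
  -- first piece
  have hA : Tendsto (fun t : ℝ => ((t + a₁ - 1) + n) * Real.Gamma (t + a₁ - 1)) l
      (𝓝 ((-1 : ℝ) ^ n / n.factorial)) := (gamma_residue n).comp hmap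
  -- inverse gamma for first denominator
  have hB : Tendsto (fun t : ℝ => (Real.Gamma (t + a₁ + b₁ - 1))⁻¹) l
      (𝓝 ((Real.Gamma (b₁ - (n : ℝ)))⁻¹)) := by
    have hc : Continuous fun t : ℝ => (Real.Gamma (t + a₁ + b₁ - 1))⁻¹ :=
      continuous_inv_gamma.comp hc1'
    have h1 := (hc.tendsto t₀).mono_left hl_le
    have h' : t₀ + a₁ + b₁ - 1 = b₁ - (n : ℝ) := by rw [ht₀]; ring
    rw [h'] at h1
    exact h1
  -- second piece tends to 0
  have hC : Tendsto (fun t : ℝ => (t - t₀) * Real.Gamma (t + a₂ - 1) *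
      (Real.Gamma (t + a₂ + b₂ - 1))⁻¹) l (𝓝 0) := by
    have h1 : Tendsto (fun t : ℝ => t - t₀) l (𝓝 0) := by
      have := ((continuous_id.sub (continuous_const : Continuous fun _ : ℝ => t₀)).tendsto
        t₀).mono_left hl_le
      simpa [Pi.sub_def] using this
    have h2 : Tendsto (fun t : ℝ => Real.Gamma (t + a₂ - 1)) l
        (𝓝 (Real.Gamma (t₀ + a₂ - 1))) := by
      have hga : ContinuousAt Real.Gamma (t₀ + a₂ - 1) := by
        refine (Real.differentiableAt_Gamma ?_).continuousAt
        intro k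
        exact hfin k
      exact (hga.tendsto.comp (hc2.tendsto t₀)).mono_left hl_le
    have h3 : Tendsto (fun t : ℝ => (Real.Gamma (t + a₂ + b₂ - 1))⁻¹) l
        (𝓝 ((Real.Gamma (t₀ + a₂ + b₂ - 1))⁻¹)) :=
      (((continuous_inv_gamma.comp hc2').tendsto t₀)).mono_left hl_le
    have := (h1.mul h2).mul h3
    simpa using this
  -- combine
  have hsum := ((hA.mul hB).const_mul (π₀ * (Real.Gamma (a₁ + b₁) / Real.Gamma a₁))).add
    (hC.const_mul ((1 - π₀) * (Real.Gamma (a₂ + b₂) / Real.Gamma a₂)))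
  have hfe : (fun t : ℝ =>
      π₀ * (Real.Gamma (a₁ + b₁) / Real.Gamma a₁) *
        (((t + a₁ - 1) + n) * Real.Gamma (t + a₁ - 1) * (Real.Gamma (t + a₁ + b₁ - 1))⁻¹) +
      (1 - π₀) * (Real.Gamma (a₂ + b₂) / Real.Gamma a₂) *
        ((t - t₀) * Real.Gamma (t + a₂ - 1) * (Real.Gamma (t + a₂ + b₂ - 1))⁻¹))
      = fun t : ℝ => (t - t₀) * m t := by
    funext t
    rw [hm t]
    have hco : t - t₀ = (t + a₁ - 1) + n := by rw [ht₀]; ring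
    rw [hco]
    simp only [div_eq_mul_inv, mul_inv]
    ring
  rw [hfe] at hsum
  have hval : π₀ * Real.Gamma (a₁ + b₁) / Real.Gamma a₁ *
      (1 / Real.Gamma (b₁ - (n : ℝ))) * ((-1 : ℝ) ^ n / n.factorial)
      = π₀ * (Real.Gamma (a₁ + b₁) / Real.Gamma a₁) *
        ((-1 : ℝ) ^ n / n.factorial * (Real.Gamma (b₁ - (n : ℝ)))⁻¹) +
      (1 - π₀) * (Real.Gamma (a₂ + b₂) / Real.Gamma a₂) * 0 := by
    simp only [div_eq_mul_inv, one_div, mul_zero, add_zero]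
    ring
  rw [hval]
  exact hsum
end

section
/- Let π ∈ (0,1) and (a₁,b₁), (a₂,b₂) ∈ ℝ²_{>0} be distinct with a₁ − a₂ not an integer or b₁ − b₂ not an integer. If π'·f(x;a₁',b₁') + (1−π')·f(x;a₂',b₂') = π·f(x;a₁,b₁) + (1−π)·f(x;a₂,b₂) for all x ∈ (0,1), with π' ∈ (0,1) and positive parameters, then the set of components {(π, a₁, b₁), (1−π, a₂, b₂)} equals {(π', a₁', b₁'), (1−π', a₂', b₂')}. -/
noncomputable def betaDen (α β x : ℝ) : ℝ :=
  Real.Gamma (α + β) / (Real.Gamma α * Real.Gamma β) * x ^ (α - 1) * (1 - x) ^ (β - 1)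

open Set Filter

/-- The core power function `x^α (1-x)^β`. -/
noncomputable def Gf (α β x : ℝ) : ℝ := x ^ α * (1 - x) ^ β

lemma Gf_pos {α β x : ℝ} (hx : x ∈ Set.Ioo (0:ℝ) 1) : 0 < Gf α β x :=
  mul_pos (Real.rpow_pos_of_pos hx.1 _)
    (Real.rpow_pos_of_pos (by have := hx.2; linarith) _)

lemma hasDerivAt_Gf {x : ℝ} (hx : x ∈ Set.Ioo (0:ℝ) 1) (α β : ℝ) :
    HasDerivAt (fun y => Gf α β y)
      (α * (x ^ (α-1) * (1-x) ^ β) - β * (x ^ α * (1-x) ^ (β-1))) x := by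
  have hx0 : x ≠ 0 := ne_of_gt hx.1
  have hx1 : (1:ℝ) - x ≠ 0 := sub_ne_zero.mpr (ne_of_gt hx.2)
  have h1 : HasDerivAt (fun y : ℝ => y ^ α) (α * x ^ (α-1)) x :=
    Real.hasDerivAt_rpow_const (Or.inl hx0)
  have h2' : HasDerivAt (fun y : ℝ => (1:ℝ) - y) (-1) x := (hasDerivAt_id x).const_sub 1
  have h2 : HasDerivAt (fun y : ℝ => ((1:ℝ)-y) ^ β) (β * (1-x) ^ (β-1) * (-1)) x := by
    exact
      (Real.hasDerivAt_rpow_const (x := 1-x) (p := β) (Or.inl hx1)).comp x h2'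
  have := h1.mul h2
  simp only [Gf]
  refine this.congr_deriv ?_
  ring

lemma eq_zero_deriv {F : ℝ → ℝ} (h : ∀ y ∈ Set.Ioo (0:ℝ) 1, F y = 0)
    {x : ℝ} (hx : x ∈ Set.Ioo (0:ℝ) 1) {d : ℝ} (hF : HasDerivAt F d x) : d = 0 := by
  have hev : (fun _ : ℝ => (0:ℝ)) =ᶠ[nhds x] F := by
    filter_upwards [isOpen_Ioo.mem_nhds hx] with y hy
    exact (h y hy).symm
  exact (hF.congr_of_eventuallyEq hev).unique (hasDerivAt_const x 0)

lemma xG_alg {x : ℝ} (hx : x ∈ Set.Ioo (0:ℝ) 1) (α β : ℝ) :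
    x * (1-x) * (α * (x ^ (α-1) * (1-x) ^ β) - β * (x ^ α * (1-x) ^ (β-1)))
      = (α - (α+β)*x) * Gf α β x := by
  have hx0 : x ≠ 0 := ne_of_gt hx.1
  have hx1 : (1:ℝ) - x ≠ 0 := sub_ne_zero.mpr (ne_of_gt hx.2)
  have e1 : x ^ α = x ^ (α-1) * x := by
    rw [← Real.rpow_add_one hx0 (α-1)]; congr 1; ring
  have e2 : (1-x) ^ β = (1-x) ^ (β-1) * (1-x) := by
    rw [← Real.rpow_add_one hx1 (β-1)]; congr 1; ring
  simp only [Gf]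
  rw [e1, e2]; ring

lemma STparams (α₁ β₁ p₁ q₁ α₂ β₂ p₂ q₂ α₃ β₃ p₃ q₃ α₄ β₄ p₄ q₄ : ℝ)
    (h : ∀ x ∈ Set.Ioo (0:ℝ) 1,
      (p₁+q₁*x) * Gf α₁ β₁ x + (p₂+q₂*x) * Gf α₂ β₂ x
        + (p₃+q₃*x) * Gf α₃ β₃ x + (p₄+q₄*x) * Gf α₄ β₄ x = 0) :
    ∀ x ∈ Set.Ioo (0:ℝ) 1,
      (x*(1-x)*q₁ + (p₁+q₁*x)*(α₁-(α₁+β₁)*x)) * Gf α₁ β₁ x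
        + (x*(1-x)*q₂ + (p₂+q₂*x)*(α₂-(α₂+β₂)*x)) * Gf α₂ β₂ x
        + (x*(1-x)*q₃ + (p₃+q₃*x)*(α₃-(α₃+β₃)*x)) * Gf α₃ β₃ x
        + (x*(1-x)*q₄ + (p₄+q₄*x)*(α₄-(α₄+β₄)*x)) * Gf α₄ β₄ x = 0 := by
  intro x hx
  have hlin : ∀ p q : ℝ, HasDerivAt (fun y : ℝ => p + q*y) q x := by
    intro p q
    simpa using ((hasDerivAt_id x).const_mul q).const_add p
  have H1 := (hlin p₁ q₁).mul (hasDerivAt_Gf hx α₁ β₁)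
  have H2 := (hlin p₂ q₂).mul (hasDerivAt_Gf hx α₂ β₂)
  have H3 := (hlin p₃ q₃).mul (hasDerivAt_Gf hx α₃ β₃)
  have H4 := (hlin p₄ q₄).mul (hasDerivAt_Gf hx α₄ β₄)
  have hS := eq_zero_deriv h hx (((H1.add H2).add H3).add H4)
  have A1 := xG_alg hx α₁ β₁
  have A2 := xG_alg hx α₂ β₂
  have A3 := xG_alg hx α₃ β₃
  have A4 := xG_alg hx α₄ β₄
  linear_combination x*(1-x)*hS - (p₁+q₁*x)*A1 - (p₂+q₂*x)*A2 - (p₃+q₃*x)*A3 - (p₄+q₄*x)*A4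

/-- Coefficients of the cubic polynomial produced by annihilating two components. -/
def qc0 (u s v t : ℝ) : ℝ := (v-u)*u*v
def qc1 (u s v t : ℝ) : ℝ := -((v-u)*(u*t+v*s+s)) - (t-s)*(u*v) + (t-s)*u
def qc2 (u s v t : ℝ) : ℝ := (v-u)*s*(t+1) + (t-s)*(u*t+v*s+s) - (t-s)*(s+u)
def qc3 (u s v t : ℝ) : ℝ := -((t-s)*s*t)

noncomputable def Qc (u s v t x : ℝ) : ℝ :=
  qc0 u s v t + qc1 u s v t * x + qc2 u s v t * x^2 + qc3 u s v t * x^3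

lemma annih (α₁ β₁ c₁ α₂ β₂ c₂ α₃ β₃ c₃ α₄ β₄ c₄ : ℝ)
    (h : ∀ x ∈ Set.Ioo (0:ℝ) 1,
      c₁ * Gf α₁ β₁ x + c₂ * Gf α₂ β₂ x + c₃ * Gf α₃ β₃ x + c₄ * Gf α₄ β₄ x = 0) :
    ∀ x ∈ Set.Ioo (0:ℝ) 1,
      c₁ * Qc (α₁-α₃) ((α₁+β₁)-(α₃+β₃)) (α₁-α₄) ((α₁+β₁)-(α₄+β₄)) x * Gf α₁ β₁ x
      + c₂ * Qc (α₂-α₃) ((α₂+β₂)-(α₃+β₃)) (α₂-α₄) ((α₂+β₂)-(α₄+β₄)) x * Gf α₂ β₂ x = 0 := by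
  have h0 : ∀ x ∈ Set.Ioo (0:ℝ) 1,
      (c₁+0*x) * Gf α₁ β₁ x + (c₂+0*x) * Gf α₂ β₂ x
        + (c₃+0*x) * Gf α₃ β₃ x + (c₄+0*x) * Gf α₄ β₄ x = 0 := by
    intro x hx; linear_combination h x hx
  have hD1 := STparams α₁ β₁ c₁ 0 α₂ β₂ c₂ 0 α₃ β₃ c₃ 0 α₄ β₄ c₄ 0 h0
  have h1 : ∀ x ∈ Set.Ioo (0:ℝ) 1,
      (c₁*(α₁-α₃) + (-(c₁*((α₁+β₁)-(α₃+β₃))))*x) * Gf α₁ β₁ x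
      + (c₂*(α₂-α₃) + (-(c₂*((α₂+β₂)-(α₃+β₃))))*x) * Gf α₂ β₂ x
      + (c₃*(α₃-α₃) + (-(c₃*((α₃+β₃)-(α₃+β₃))))*x) * Gf α₃ β₃ x
      + (c₄*(α₄-α₃) + (-(c₄*((α₄+β₄)-(α₃+β₃))))*x) * Gf α₄ β₄ x = 0 := by
    intro x hx
    linear_combination hD1 x hx - (α₃ - (α₃+β₃)*x) * h x hx
  have hD2 := STparams α₁ β₁ (c₁*(α₁-α₃)) (-(c₁*((α₁+β₁)-(α₃+β₃))))
    α₂ β₂ (c₂*(α₂-α₃)) (-(c₂*((α₂+β₂)-(α₃+β₃))))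
    α₃ β₃ (c₃*(α₃-α₃)) (-(c₃*((α₃+β₃)-(α₃+β₃))))
    α₄ β₄ (c₄*(α₄-α₃)) (-(c₄*((α₄+β₄)-(α₃+β₃)))) h1
  intro x hx
  simp only [Qc, qc0, qc1, qc2, qc3]
  linear_combination ((α₃-α₄) - ((α₃+β₃)-(α₄+β₄))*x) * (hD2 x hx)
    + (((α₃+β₃)-(α₄+β₄))*x*(1-x) - ((α₃-α₄) - ((α₃+β₃)-(α₄+β₄))*x)*(α₄-(α₄+β₄)*x)) * (h1 x hx)

set_option linter.unusedVariables false

lemma CL (u s v t : ℝ) (hW : ¬(u = v ∧ s = t))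
    (h0 : qc0 u s v t = 0) (h1 : qc1 u s v t = 0)
    (h2 : qc2 u s v t = 0) (h3 : qc3 u s v t = 0) :
    (u = 0 ∧ s = 0) ∨ (v = 0 ∧ t = 0) ∨
      ((∃ m : ℤ, u = (m:ℝ)) ∧ (∃ m : ℤ, s - u = (m:ℝ)) ∧
       (∃ m : ℤ, v = (m:ℝ)) ∧ (∃ m : ℤ, t - v = (m:ℝ))) := by
  simp only [qc0, qc1, qc2, qc3] at h0 h1 h2 h3
  have h3' : t - s = 0 ∨ s = 0 ∨ t = 0 := by
    have hf : (t-s)*s*t = 0 := by linear_combination -h3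
    rcases mul_eq_zero.mp hf with hf' | h
    · rcases mul_eq_zero.mp hf' with h | h
      · exact Or.inl h
      · exact Or.inr (Or.inl h)
    · exact Or.inr (Or.inr h)
  rcases h3' with hts | hs | ht
  · -- case t = s
    have ht : t = s := by linarith
    subst ht
    have huv : v - u ≠ 0 := fun h => hW ⟨by linarith, rfl⟩
    have hf0 : (v-u)*(u*v) = 0 := by linear_combination h0
    have huv0 : u*v = 0 := (mul_eq_zero.mp hf0).resolve_left huv
    have hf1 : (v-u)*(t*(u+v+1)) = 0 := by linear_combination -h1
    have hkey1 : t*(u+v+1) = 0 := (mul_eq_zero.mp hf1).resolve_left huv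
    have hf2 : (v-u)*(t*(t+1)) = 0 := by linear_combination h2
    have hkey2 : t*(t+1) = 0 := (mul_eq_zero.mp hf2).resolve_left huv
    rcases mul_eq_zero.mp hkey2 with hs0 | hs1
    · subst hs0
      rcases mul_eq_zero.mp huv0 with h | h
      · exact Or.inl ⟨h, rfl⟩
      · exact Or.inr (Or.inl ⟨h, rfl⟩)
    · have hs : t = -1 := by linarith
      have hsum : u + v + 1 = 0 := by
        rcases mul_eq_zero.mp hkey1 with h | h
        · exfalso; rw [h] at hs; norm_num at hs
        · exact h
      rcases mul_eq_zero.mp huv0 with h | h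
      · refine Or.inr (Or.inr ⟨⟨0, by push_cast; linarith⟩, ⟨-1, by push_cast; linarith⟩,
          ⟨-1, by push_cast; linarith⟩, ⟨0, by push_cast; linarith⟩⟩)
      · refine Or.inr (Or.inr ⟨⟨-1, by push_cast; linarith⟩, ⟨0, by push_cast; linarith⟩,
          ⟨0, by push_cast; linarith⟩, ⟨-1, by push_cast; linarith⟩⟩)
  · -- case s = 0
    subst hs
    have hf1 : t*(u*(1+u-2*v)) = 0 := by linear_combination h1
    have hf2 : t*(u*(t-1)) = 0 := by linear_combination h2
    by_cases ht0 : t = 0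
    · subst ht0
      have huv : v - u ≠ 0 := fun h => hW ⟨by linarith, rfl⟩
      have hf0 : (v-u)*(u*v) = 0 := by linear_combination h0
      rcases mul_eq_zero.mp ((mul_eq_zero.mp hf0).resolve_left huv) with h | h
      · exact Or.inl ⟨h, rfl⟩
      · exact Or.inr (Or.inl ⟨h, rfl⟩)
    · by_cases hu0 : u = 0
      · exact Or.inl ⟨hu0, rfl⟩
      · have ht1 : t = 1 := by
          have := (mul_eq_zero.mp ((mul_eq_zero.mp hf2).resolve_left ht0)).resolve_left hu0
          linarith
        have hv : 1 + u - 2*v = 0 :=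
          (mul_eq_zero.mp ((mul_eq_zero.mp hf1).resolve_left ht0)).resolve_left hu0
        have hf0 : ((v-u)*u)*v = 0 := by linear_combination h0
        rcases mul_eq_zero.mp hf0 with h | hv0
        · have huv : v = u := by
            rcases mul_eq_zero.mp h with h' | h'
            · linarith
            · exact absurd h' hu0
          have hu1 : u = 1 := by rw [huv] at hv; linarith
          refine Or.inr (Or.inr ⟨⟨1, by push_cast; linarith⟩, ⟨-1, by push_cast; linarith⟩,
            ⟨1, by push_cast; linarith [huv]⟩, ⟨0, by push_cast; rw [huv] at *; linarith⟩⟩)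
        · have hu1 : u = -1 := by rw [hv0] at hv; linarith
          refine Or.inr (Or.inr ⟨⟨-1, by push_cast; linarith⟩, ⟨1, by push_cast; linarith⟩,
            ⟨0, by push_cast; linarith⟩, ⟨1, by push_cast; linarith [hv0]⟩⟩)
  · -- case t = 0
    subst ht
    have hf1 : s*(v*(2*u-v-1)) = 0 := by linear_combination h1
    have hf2 : s*(v*(1-s)) = 0 := by linear_combination h2
    by_cases hs0 : s = 0
    · subst hs0
      have huv : v - u ≠ 0 := fun h => hW ⟨by linarith, rfl⟩
      have hf0 : (v-u)*(u*v) = 0 := by linear_combination h0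
      rcases mul_eq_zero.mp ((mul_eq_zero.mp hf0).resolve_left huv) with h | h
      · exact Or.inl ⟨h, rfl⟩
      · exact Or.inr (Or.inl ⟨h, rfl⟩)
    · by_cases hv0 : v = 0
      · exact Or.inr (Or.inl ⟨hv0, rfl⟩)
      · have hs1 : s = 1 := by
          have := (mul_eq_zero.mp ((mul_eq_zero.mp hf2).resolve_left hs0)).resolve_left hv0
          linarith
        have hu : 2*u - v - 1 = 0 :=
          (mul_eq_zero.mp ((mul_eq_zero.mp hf1).resolve_left hs0)).resolve_left hv0
        have hf0 : ((v-u)*u)*v = 0 := by linear_combination h0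
        have h' := (mul_eq_zero.mp hf0).resolve_right hv0
        rcases mul_eq_zero.mp h' with h | hu0
        · have huv : v = u := by linarith
          have hu1 : u = 1 := by rw [huv] at hu; linarith
          refine Or.inr (Or.inr ⟨⟨1, by push_cast; linarith⟩, ⟨0, by push_cast; linarith⟩,
            ⟨1, by push_cast; linarith [huv]⟩, ⟨-1, by push_cast; rw [huv] at *; linarith⟩⟩)
        · have hv1 : v = -1 := by rw [hu0] at hu; linarith
          refine Or.inr (Or.inr ⟨⟨0, by push_cast; linarith⟩, ⟨1, by push_cast; linarith⟩,
            ⟨-1, by push_cast; linarith⟩, ⟨1, by push_cast; linarith [hv1]⟩⟩)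

lemma rpow_tendsto_zero {c : ℝ} (hc : 0 < c) :
    Tendsto (fun x : ℝ => x ^ c) (nhdsWithin 0 (Set.Ioi 0)) (nhds 0) := by
  have hcont : ContinuousAt (fun x : ℝ => x ^ c) 0 :=
    Real.continuousAt_rpow_const 0 c (Or.inr hc.le)
  have h := hcont.tendsto
  rw [Real.zero_rpow (ne_of_gt hc)] at h
  exact h.mono_left nhdsWithin_le_nhds

lemma pow_lim {c L : ℝ}
    (h : Tendsto (fun x : ℝ => x ^ c) (nhdsWithin 0 (Set.Ioi 0)) (nhds L))
    (hL : L ≠ 0) : c = 0 := by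
  by_contra hc
  rcases lt_or_gt_of_ne hc with hneg | hpos
  · have h2 := rpow_tendsto_zero (neg_pos.mpr hneg)
    have h3 : Tendsto (fun x : ℝ => x ^ c * x ^ (-c))
        (nhdsWithin 0 (Set.Ioi 0)) (nhds (L * 0)) := h.mul h2
    have hev : (fun x : ℝ => x ^ c * x ^ (-c)) =ᶠ[nhdsWithin 0 (Set.Ioi 0)]
        (fun _ : ℝ => (1:ℝ)) := by
      filter_upwards [self_mem_nhdsWithin] with x hx
      rw [← Real.rpow_add hx]
      simp
    have h4 : Tendsto (fun _ : ℝ => (1:ℝ)) (nhdsWithin 0 (Set.Ioi 0)) (nhds (L*0)) :=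
      h3.congr' hev
    have := tendsto_nhds_unique h4 tendsto_const_nhds
    simp at this
  · exact hL (tendsto_nhds_unique h (rpow_tendsto_zero hpos))

lemma one_sub_rpow_tendsto (δ : ℝ) :
    Tendsto (fun x : ℝ => (1-x) ^ δ) (nhdsWithin 0 (Set.Ioi 0)) (nhds 1) := by
  have hc : ContinuousAt (fun x : ℝ => (1-x) ^ δ) 0 := by
    apply ContinuousAt.rpow_const
    · exact continuousAt_const.sub continuousAt_id
    · left; norm_num
  have h := hc.tendsto
  norm_num [Real.one_rpow] at h
  exact h.mono_left nhdsWithin_le_nhds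

lemma cubic_vanish {c0 c1 c2 c3 : ℝ}
    (h : ∀ x ∈ Set.Ioo (0:ℝ) 1, c0 + c1*x + c2*x^2 + c3*x^3 = 0) :
    c0 = 0 ∧ c1 = 0 ∧ c2 = 0 ∧ c3 = 0 := by
  have h1 := h (1/5) (by constructor <;> norm_num)
  have h2 := h (2/5) (by constructor <;> norm_num)
  have h3 := h (3/5) (by constructor <;> norm_num)
  have h4 := h (4/5) (by constructor <;> norm_num)
  norm_num at h1 h2 h3 h4
  refine ⟨by linarith, by linarith, by linarith, by linarith⟩

lemma cubic_lowest {c0 c1 c2 c3 : ℝ} (h : ¬(c0 = 0 ∧ c1 = 0 ∧ c2 = 0 ∧ c3 = 0)) :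
    ∃ (k : ℕ) (L : ℝ), L ≠ 0 ∧
      Tendsto (fun x : ℝ => (c0 + c1*x + c2*x^2 + c3*x^3) / x ^ (k:ℕ))
        (nhdsWithin 0 (Set.Ioi 0)) (nhds L) := by
  by_cases h0 : c0 = 0
  · by_cases h1 : c1 = 0
    · by_cases h2 : c2 = 0
      · have h3 : c3 ≠ 0 := by tauto
        refine ⟨3, c3, h3, ?_⟩
        have hT : Tendsto (fun _ : ℝ => c3) (nhdsWithin 0 (Set.Ioi 0)) (nhds c3) :=
          tendsto_const_nhds
        refine hT.congr' ?_
        filter_upwards [self_mem_nhdsWithin] with x hx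
        have hx0 : x ≠ 0 := ne_of_gt hx
        rw [h0, h1, h2]
        field_simp
        ring
      · refine ⟨2, c2, h2, ?_⟩
        have hT : Tendsto (fun x : ℝ => c2 + c3*x) (nhdsWithin 0 (Set.Ioi 0)) (nhds c2) := by
          have : Continuous (fun x : ℝ => c2 + c3*x) := by continuity
          have h' := this.tendsto 0
          norm_num at h'
          exact h'.mono_left nhdsWithin_le_nhds
        refine hT.congr' ?_
        filter_upwards [self_mem_nhdsWithin] with x hx
        have hx0 : x ≠ 0 := ne_of_gt hx
        rw [h0, h1]
        field_simp
        ring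
    · refine ⟨1, c1, h1, ?_⟩
      have hT : Tendsto (fun x : ℝ => c1 + c2*x + c3*x^2)
          (nhdsWithin 0 (Set.Ioi 0)) (nhds c1) := by
        have : Continuous (fun x : ℝ => c1 + c2*x + c3*x^2) := by continuity
        have h' := this.tendsto 0
        norm_num at h'
        exact h'.mono_left nhdsWithin_le_nhds
      refine hT.congr' ?_
      filter_upwards [self_mem_nhdsWithin] with x hx
      have hx0 : x ≠ 0 := ne_of_gt hx
      rw [h0]
      field_simp
      ring
  · refine ⟨0, c0, h0, ?_⟩
    have hT : Tendsto (fun x : ℝ => c0 + c1*x + c2*x^2 + c3*x^3)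
        (nhdsWithin 0 (Set.Ioi 0)) (nhds c0) := by
      have : Continuous (fun x : ℝ => c0 + c1*x + c2*x^2 + c3*x^3) := by continuity
      have h' := this.tendsto 0
      norm_num at h'
      exact h'.mono_left nhdsWithin_le_nhds
    refine hT.congr' ?_
    filter_upwards [self_mem_nhdsWithin] with x hx
    simp

lemma rat_exp {A0 A1 A2 A3 B0 B1 B2 B3 γ δ : ℝ}
    (hA : ¬(A0 = 0 ∧ A1 = 0 ∧ A2 = 0 ∧ A3 = 0))
    (h : ∀ x ∈ Set.Ioo (0:ℝ) 1,
      (A0 + A1*x + A2*x^2 + A3*x^3) * (x ^ γ * (1-x) ^ δ)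
        = B0 + B1*x + B2*x^2 + B3*x^3) :
    ∃ m : ℤ, γ = (m:ℝ) := by
  have hB : ¬(B0 = 0 ∧ B1 = 0 ∧ B2 = 0 ∧ B3 = 0) := by
    rintro ⟨e0, e1, e2, e3⟩
    apply hA
    apply cubic_vanish
    intro x hx
    have hpos : 0 < x ^ γ * (1-x) ^ δ :=
      mul_pos (Real.rpow_pos_of_pos hx.1 _)
        (Real.rpow_pos_of_pos (by have := hx.2; linarith) _)
    have hh := h x hx
    rw [e0, e1, e2, e3] at hh
    have hh0 : (A0 + A1*x + A2*x^2 + A3*x^3) * (x ^ γ * (1-x) ^ δ) = 0 := by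
      linear_combination hh
    exact (mul_eq_zero.mp hh0).resolve_right (ne_of_gt hpos)
  obtain ⟨k, L, hL, hTA⟩ := cubic_lowest hA
  obtain ⟨l, M, hM, hTB⟩ := cubic_lowest hB
  have hDen : Tendsto (fun x : ℝ => ((A0 + A1*x + A2*x^2 + A3*x^3) / x ^ (k:ℕ)) * (1-x) ^ δ)
      (nhdsWithin 0 (Set.Ioi 0)) (nhds (L * 1)) := hTA.mul (one_sub_rpow_tendsto δ)
  have hQ : Tendsto (fun x : ℝ =>
      ((B0 + B1*x + B2*x^2 + B3*x^3) / x ^ (l:ℕ)) /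
        (((A0 + A1*x + A2*x^2 + A3*x^3) / x ^ (k:ℕ)) * (1-x) ^ δ))
      (nhdsWithin 0 (Set.Ioi 0)) (nhds (M / (L * 1))) :=
    hTB.div hDen (by simpa using hL)
  have hev : (fun x : ℝ =>
      ((B0 + B1*x + B2*x^2 + B3*x^3) / x ^ (l:ℕ)) /
        (((A0 + A1*x + A2*x^2 + A3*x^3) / x ^ (k:ℕ)) * (1-x) ^ δ))
      =ᶠ[nhdsWithin 0 (Set.Ioi 0)] (fun x : ℝ => x ^ (γ + (k:ℝ) - (l:ℝ))) := by
    filter_upwards [Ioo_mem_nhdsGT_of_mem (show (0:ℝ) ∈ Set.Ico (0:ℝ) 1 by constructor <;> norm_num),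
      hTA.eventually_ne hL] with x hx hA0
    have hx0 : 0 < x := hx.1
    have hx1 : 0 < 1 - x := by have := hx.2; linarith
    have hAx : A0 + A1*x + A2*x^2 + A3*x^3 ≠ 0 := by
      intro hz
      apply hA0
      rw [hz]
      simp
    have hd : (1-x) ^ δ ≠ 0 := ne_of_gt (Real.rpow_pos_of_pos hx1 _)
    have hrw : x ^ (γ + (k:ℝ) - (l:ℝ)) = x ^ γ * x ^ (k:ℕ) / x ^ (l:ℕ) := by
      rw [Real.rpow_sub hx0, Real.rpow_add hx0, Real.rpow_natCast, Real.rpow_natCast]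
    rw [hrw, ← h x hx]
    have hxk : (x:ℝ) ^ (k:ℕ) ≠ 0 := pow_ne_zero _ (ne_of_gt hx0)
    have hxl : (x:ℝ) ^ (l:ℕ) ≠ 0 := pow_ne_zero _ (ne_of_gt hx0)
    generalize A0 + A1*x + A2*x^2 + A3*x^3 = P at hAx ⊢
    field_simp
  have hfin : Tendsto (fun x : ℝ => x ^ (γ + (k:ℝ) - (l:ℝ)))
      (nhdsWithin 0 (Set.Ioi 0)) (nhds (M / (L * 1))) := hQ.congr' hev
  have hc0 : γ + (k:ℝ) - (l:ℝ) = 0 :=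
    pow_lim hfin (div_ne_zero hM (by simpa using hL))
  exact ⟨(l:ℤ) - (k:ℤ), by push_cast; linarith⟩

lemma rat_exp_delta {A0 A1 A2 A3 B0 B1 B2 B3 γ δ : ℝ}
    (hA : ¬(A0 = 0 ∧ A1 = 0 ∧ A2 = 0 ∧ A3 = 0))
    (h : ∀ x ∈ Set.Ioo (0:ℝ) 1,
      (A0 + A1*x + A2*x^2 + A3*x^3) * (x ^ γ * (1-x) ^ δ)
        = B0 + B1*x + B2*x^2 + B3*x^3) :
    ∃ m : ℤ, δ = (m:ℝ) := by
  apply rat_exp (A0 := A0+A1+A2+A3) (A1 := -(A1+2*A2+3*A3)) (A2 := A2+3*A3) (A3 := -A3)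
    (B0 := B0+B1+B2+B3) (B1 := -(B1+2*B2+3*B3)) (B2 := B2+3*B3) (B3 := -B3) (γ := δ) (δ := γ)
  · rintro ⟨z0, z1, z2, z3⟩
    apply hA
    apply cubic_vanish
    intro x hx
    linear_combination z0 + (1-x)*z1 + (1-x)^2*z2 + (1-x)^3*z3
  · intro u hu
    have hu' : 1 - u ∈ Set.Ioo (0:ℝ) 1 := ⟨by have := hu.2; linarith, by have := hu.1; linarith⟩
    have hh := h (1-u) hu'
    rw [show (1:ℝ) - (1-u) = u by ring] at hh
    linear_combination hh

lemma two_term {α β α' β' c d : ℝ} (hc : c ≠ 0)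
    (h : ∀ x ∈ Set.Ioo (0:ℝ) 1, c * Gf α β x = d * Gf α' β' x) :
    α = α' ∧ β = β' ∧ c = d := by
  have hhalf : (1/2 : ℝ) ∈ Set.Ioo (0:ℝ) 1 := by constructor <;> norm_num
  have hd : d ≠ 0 := by
    intro hd0
    have hh := h (1/2) hhalf
    rw [hd0] at hh
    norm_num at hh
    rcases hh with hh | hh
    · exact hc hh
    · exact absurd hh (ne_of_gt (Gf_pos hhalf))
  have hdc : d / c ≠ 0 := div_ne_zero hd hc
  have hratio : ∀ x ∈ Set.Ioo (0:ℝ) 1, x ^ (α-α') * (1-x) ^ (β-β') = d / c := by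
    intro x hx
    have hx0 : 0 < x := hx.1
    have hx1 : 0 < 1 - x := by have := hx.2; linarith
    have hh := h x hx
    simp only [Gf] at hh
    have h1 : (x:ℝ) ^ α' ≠ 0 := ne_of_gt (Real.rpow_pos_of_pos hx0 _)
    have h2 : ((1:ℝ)-x) ^ β' ≠ 0 := ne_of_gt (Real.rpow_pos_of_pos hx1 _)
    have e1 : x ^ α = x ^ (α-α') * x ^ α' := by
      rw [← Real.rpow_add hx0]; congr 1; ring
    have e2 : (1-x) ^ β = (1-x) ^ (β-β') * (1-x) ^ β' := by
      rw [← Real.rpow_add hx1]; congr 1; ring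
    rw [e1, e2] at hh
    rw [eq_div_iff hc]
    apply mul_right_cancel₀ (mul_ne_zero h1 h2)
    linear_combination hh
  have hγ : α - α' = 0 := by
    have hT : Tendsto (fun x : ℝ => (d/c) / (1-x) ^ (β-β'))
        (nhdsWithin 0 (Set.Ioi 0)) (nhds ((d/c)/1)) :=
      tendsto_const_nhds.div (one_sub_rpow_tendsto (β-β')) one_ne_zero
    have hev : (fun x : ℝ => (d/c) / (1-x) ^ (β-β')) =ᶠ[nhdsWithin 0 (Set.Ioi 0)]
        (fun x : ℝ => x ^ (α-α')) := by
      filter_upwards [Ioo_mem_nhdsGT_of_mem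
        (show (0:ℝ) ∈ Set.Ico (0:ℝ) 1 by constructor <;> norm_num)] with x hx
      have hx1 : 0 < 1 - x := by have := hx.2; linarith
      have h2 : ((1:ℝ)-x) ^ (β-β') ≠ 0 := ne_of_gt (Real.rpow_pos_of_pos hx1 _)
      rw [eq_comm, ← hratio x hx]
      field_simp
    exact pow_lim (hT.congr' hev) (by simpa using hdc)
  have hsub : ∀ u ∈ Set.Ioo (0:ℝ) 1, u ^ (β-β') = d / c := by
    intro u hu
    have hu' : 1 - u ∈ Set.Ioo (0:ℝ) 1 := ⟨by have := hu.2; linarith, by have := hu.1; linarith⟩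
    have hh := hratio (1-u) hu'
    rw [hγ, Real.rpow_zero, show (1:ℝ) - (1-u) = u by ring, one_mul] at hh
    exact hh
  have hδ : β - β' = 0 := by
    have hT : Tendsto (fun _ : ℝ => d/c) (nhdsWithin 0 (Set.Ioi 0)) (nhds (d/c)) :=
      tendsto_const_nhds
    have hev : (fun _ : ℝ => d/c) =ᶠ[nhdsWithin 0 (Set.Ioi 0)]
        (fun u : ℝ => u ^ (β-β')) := by
      filter_upwards [Ioo_mem_nhdsGT_of_mem
        (show (0:ℝ) ∈ Set.Ico (0:ℝ) 1 by constructor <;> norm_num)] with u hu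
      exact (hsub u hu).symm
    exact pow_lim (hT.congr' hev) hdc
  have hcd : c = d := by
    have hh := hsub (1/2) hhalf
    rw [hδ, Real.rpow_zero] at hh
    field_simp at hh
    linarith
  exact ⟨by linarith, by linarith, hcd⟩

lemma Lmain (α₁ β₁ α₂ β₂ α₃ β₃ α₄ β₄ e₁ e₂ e₃ e₄ : ℝ)
    (he₁ : 0 < e₁) (he₂ : 0 < e₂) (he₃ : 0 < e₃) (he₄ : 0 < e₄)
    (hp34 : ¬(α₃ = α₄ ∧ β₃ = β₄))
    (hnon : ¬((∃ m : ℤ, α₃ - α₄ = (m:ℝ)) ∧ (∃ n : ℤ, β₃ - β₄ = (n:ℝ))))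
    (hE : ∀ x ∈ Set.Ioo (0:ℝ) 1,
      e₁ * Gf α₁ β₁ x + e₂ * Gf α₂ β₂ x = e₃ * Gf α₃ β₃ x + e₄ * Gf α₄ β₄ x) :
    (α₁ = α₃ ∧ β₁ = β₃ ∧ e₁ = e₃ ∧ α₂ = α₄ ∧ β₂ = β₄ ∧ e₂ = e₄) ∨
    (α₁ = α₄ ∧ β₁ = β₄ ∧ e₁ = e₄ ∧ α₂ = α₃ ∧ β₂ = β₃ ∧ e₂ = e₃) := by
  have hhalf : (1/2 : ℝ) ∈ Set.Ioo (0:ℝ) 1 := by constructor <;> norm_num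
  -- Step 0 : the two left-hand components are distinct
  have hp12 : ¬(α₁ = α₂ ∧ β₁ = β₂) := by
    rintro ⟨ha, hb⟩
    have hM : ∀ x ∈ Set.Ioo (0:ℝ) 1,
        (e₁+e₂) * Gf α₁ β₁ x + 0 * Gf α₁ β₁ x
          + (-e₃) * Gf α₃ β₃ x + (-e₄) * Gf α₄ β₄ x = 0 := by
      intro x hx
      have hh := hE x hx
      rw [← ha, ← hb] at hh
      linear_combination hh
    have hQ := annih α₁ β₁ (e₁+e₂) α₁ β₁ 0 α₃ β₃ (-e₃) α₄ β₄ (-e₄) hM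
    have hQ0 : ∀ x ∈ Set.Ioo (0:ℝ) 1,
        qc0 (α₁-α₃) ((α₁+β₁)-(α₃+β₃)) (α₁-α₄) ((α₁+β₁)-(α₄+β₄))
        + qc1 (α₁-α₃) ((α₁+β₁)-(α₃+β₃)) (α₁-α₄) ((α₁+β₁)-(α₄+β₄)) * x
        + qc2 (α₁-α₃) ((α₁+β₁)-(α₃+β₃)) (α₁-α₄) ((α₁+β₁)-(α₄+β₄)) * x^2
        + qc3 (α₁-α₃) ((α₁+β₁)-(α₃+β₃)) (α₁-α₄) ((α₁+β₁)-(α₄+β₄)) * x^3 = 0 := by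
      intro x hx
      have h' : (qc0 (α₁-α₃) ((α₁+β₁)-(α₃+β₃)) (α₁-α₄) ((α₁+β₁)-(α₄+β₄))
          + qc1 (α₁-α₃) ((α₁+β₁)-(α₃+β₃)) (α₁-α₄) ((α₁+β₁)-(α₄+β₄)) * x
          + qc2 (α₁-α₃) ((α₁+β₁)-(α₃+β₃)) (α₁-α₄) ((α₁+β₁)-(α₄+β₄)) * x^2
          + qc3 (α₁-α₃) ((α₁+β₁)-(α₃+β₃)) (α₁-α₄) ((α₁+β₁)-(α₄+β₄)) * x^3)
          * ((e₁+e₂) * Gf α₁ β₁ x) = 0 := by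
        have hh := hQ x hx
        simp only [Qc] at hh
        linear_combination hh
      exact (mul_eq_zero.mp h').resolve_right
        (ne_of_gt (mul_pos (by linarith) (Gf_pos hx)))
    obtain ⟨z0, z1, z2, z3⟩ := cubic_vanish hQ0
    have hW : ¬(α₁-α₃ = α₁-α₄ ∧ (α₁+β₁)-(α₃+β₃) = (α₁+β₁)-(α₄+β₄)) := by
      rintro ⟨h', h''⟩
      exact hp34 ⟨by linarith, by linarith⟩
    rcases CL _ _ _ _ hW z0 z1 z2 z3 with ⟨hu, hs⟩ | ⟨hv, ht⟩ |
      ⟨⟨m1, hm1⟩, ⟨m2, hm2⟩, ⟨m3, hm3⟩, ⟨m4, hm4⟩⟩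
    · have hα : α₃ = α₁ := by linarith
      have hβ : β₃ = β₁ := by linarith
      by_cases hce : e₁ + e₂ - e₃ = 0
      · have h2 := hE (1/2) hhalf
        rw [← ha, ← hb, hα, hβ] at h2
        have h' : e₄ * Gf α₄ β₄ (1/2) = 0 := by
          linear_combination Gf α₁ β₁ (1/2) * hce - h2
        exact absurd h' (ne_of_gt (mul_pos he₄ (Gf_pos hhalf)))
      · have hR : ∀ x ∈ Set.Ioo (0:ℝ) 1,
            (e₁+e₂-e₃) * Gf α₁ β₁ x = e₄ * Gf α₄ β₄ x := by
          intro x hx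
          have hh := hE x hx
          rw [← ha, ← hb, hα, hβ] at hh
          linear_combination hh
        obtain ⟨hA, hB, _⟩ := two_term hce hR
        exact hp34 ⟨by linarith, by linarith⟩
    · have hα : α₄ = α₁ := by linarith
      have hβ : β₄ = β₁ := by linarith
      by_cases hce : e₁ + e₂ - e₄ = 0
      · have h2 := hE (1/2) hhalf
        rw [← ha, ← hb, hα, hβ] at h2
        have h' : e₃ * Gf α₃ β₃ (1/2) = 0 := by
          linear_combination Gf α₁ β₁ (1/2) * hce - h2
        exact absurd h' (ne_of_gt (mul_pos he₃ (Gf_pos hhalf)))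
      · have hR : ∀ x ∈ Set.Ioo (0:ℝ) 1,
            (e₁+e₂-e₄) * Gf α₁ β₁ x = e₃ * Gf α₃ β₃ x := by
          intro x hx
          have hh := hE x hx
          rw [← ha, ← hb, hα, hβ] at hh
          linear_combination hh
        obtain ⟨hA, hB, _⟩ := two_term hce hR
        exact hp34 ⟨by linarith, by linarith⟩
    · exact hnon ⟨⟨m3 - m1, by push_cast; linarith⟩, ⟨m4 - m2, by push_cast; linarith⟩⟩
  -- Main annihilation : kill components 1 and 2
  have hAn := annih α₃ β₃ (-e₃) α₄ β₄ (-e₄) α₁ β₁ e₁ α₂ β₂ e₂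
    (fun x hx => by linear_combination hE x hx)
  by_cases hq3 : qc0 (α₃-α₁) ((α₃+β₃)-(α₁+β₁)) (α₃-α₂) ((α₃+β₃)-(α₂+β₂)) = 0
      ∧ qc1 (α₃-α₁) ((α₃+β₃)-(α₁+β₁)) (α₃-α₂) ((α₃+β₃)-(α₂+β₂)) = 0
      ∧ qc2 (α₃-α₁) ((α₃+β₃)-(α₁+β₁)) (α₃-α₂) ((α₃+β₃)-(α₂+β₂)) = 0
      ∧ qc3 (α₃-α₁) ((α₃+β₃)-(α₁+β₁)) (α₃-α₂) ((α₃+β₃)-(α₂+β₂)) = 0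
  · -- both cubic coefficient systems vanish; classification applies to both components
    obtain ⟨w0, w1, w2, w3⟩ := hq3
    have hQ4 : ∀ x ∈ Set.Ioo (0:ℝ) 1,
        qc0 (α₄-α₁) ((α₄+β₄)-(α₁+β₁)) (α₄-α₂) ((α₄+β₄)-(α₂+β₂))
        + qc1 (α₄-α₁) ((α₄+β₄)-(α₁+β₁)) (α₄-α₂) ((α₄+β₄)-(α₂+β₂)) * x
        + qc2 (α₄-α₁) ((α₄+β₄)-(α₁+β₁)) (α₄-α₂) ((α₄+β₄)-(α₂+β₂)) * x^2
        + qc3 (α₄-α₁) ((α₄+β₄)-(α₁+β₁)) (α₄-α₂) ((α₄+β₄)-(α₂+β₂)) * x^3 = 0 := by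
      intro x hx
      have hh := hAn x hx
      simp only [Qc] at hh
      rw [w0, w1, w2, w3] at hh
      have h' : (qc0 (α₄-α₁) ((α₄+β₄)-(α₁+β₁)) (α₄-α₂) ((α₄+β₄)-(α₂+β₂))
          + qc1 (α₄-α₁) ((α₄+β₄)-(α₁+β₁)) (α₄-α₂) ((α₄+β₄)-(α₂+β₂)) * x
          + qc2 (α₄-α₁) ((α₄+β₄)-(α₁+β₁)) (α₄-α₂) ((α₄+β₄)-(α₂+β₂)) * x^2
          + qc3 (α₄-α₁) ((α₄+β₄)-(α₁+β₁)) (α₄-α₂) ((α₄+β₄)-(α₂+β₂)) * x^3)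
          * (e₄ * Gf α₄ β₄ x) = 0 := by
        linear_combination -hh
      exact (mul_eq_zero.mp h').resolve_right (ne_of_gt (mul_pos he₄ (Gf_pos hx)))
    obtain ⟨y0, y1, y2, y3⟩ := cubic_vanish hQ4
    have hW12 : ∀ a b : ℝ, ¬(a-α₁ = a-α₂ ∧ (a+b)-(α₁+β₁) = (a+b)-(α₂+β₂)) := by
      intro a b
      rintro ⟨h', h''⟩
      exact hp12 ⟨by linarith, by linarith⟩
    have CL3 := CL _ _ _ _ (hW12 α₃ β₃) w0 w1 w2 w3
    have CL4 := CL _ _ _ _ (hW12 α₄ β₄) y0 y1 y2 y3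
    rcases CL3 with ⟨hu3, hs3⟩ | ⟨hv3, ht3⟩ |
      ⟨⟨m1, hm1⟩, ⟨m2, hm2⟩, ⟨m3, hm3⟩, ⟨m4, hm4⟩⟩
    · -- p₃ = p₁
      have hα31 : α₃ = α₁ := by linarith
      have hβ31 : β₃ = β₁ := by linarith
      rcases CL4 with ⟨hu4, hs4⟩ | ⟨hv4, ht4⟩ |
        ⟨⟨n1, hn1⟩, ⟨n2, hn2⟩, ⟨n3, hn3⟩, ⟨n4, hn4⟩⟩
      · -- p₄ = p₁ = p₃ : contradiction
        exact absurd ⟨by linarith, by linarith⟩ hp34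
      · -- p₄ = p₂ : straight match
        have hα42 : α₄ = α₂ := by linarith
        have hβ42 : β₄ = β₂ := by linarith
        have hred : ∀ x ∈ Set.Ioo (0:ℝ) 1,
            (e₁-e₃) * Gf α₁ β₁ x + (e₂-e₄) * Gf α₂ β₂ x = 0 := by
          intro x hx
          have hh := hE x hx
          rw [hα31, hβ31, hα42, hβ42] at hh
          linear_combination hh
        by_cases h13 : e₁ = e₃
        · have h24 : e₂ = e₄ := by
            have hh := hred (1/2) hhalf
            rw [h13] at hh
            have h' : (e₂-e₄) * Gf α₂ β₂ (1/2) = 0 := by linear_combination hh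
            rcases mul_eq_zero.mp h' with h'' | h''
            · linarith
            · exact absurd h'' (ne_of_gt (Gf_pos hhalf))
          exact Or.inl ⟨hα31.symm, hβ31.symm, h13, hα42.symm, hβ42.symm, h24⟩
        · exfalso
          have h2 := two_term (sub_ne_zero.mpr h13)
            (fun x hx => by linear_combination hred x hx :
              ∀ x ∈ Set.Ioo (0:ℝ) 1, (e₁-e₃) * Gf α₁ β₁ x = (e₄-e₂) * Gf α₂ β₂ x)
          exact hp12 ⟨h2.1, h2.2.1⟩
      · -- p₄ integrally shifted from p₁, p₂ ; contradicts hnon via p₃ = p₁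
        refine absurd ⟨⟨-n1, ?_⟩, ⟨-n2, ?_⟩⟩ hnon
        · push_cast; linarith
        · push_cast; linarith
    · -- p₃ = p₂
      have hα32 : α₃ = α₂ := by linarith
      have hβ32 : β₃ = β₂ := by linarith
      rcases CL4 with ⟨hu4, hs4⟩ | ⟨hv4, ht4⟩ |
        ⟨⟨n1, hn1⟩, ⟨n2, hn2⟩, ⟨n3, hn3⟩, ⟨n4, hn4⟩⟩
      · -- p₄ = p₁ : cross match
        have hα41 : α₄ = α₁ := by linarith
        have hβ41 : β₄ = β₁ := by linarith
        have hred : ∀ x ∈ Set.Ioo (0:ℝ) 1,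
            (e₁-e₄) * Gf α₁ β₁ x + (e₂-e₃) * Gf α₂ β₂ x = 0 := by
          intro x hx
          have hh := hE x hx
          rw [hα32, hβ32, hα41, hβ41] at hh
          linear_combination hh
        by_cases h14 : e₁ = e₄
        · have h23 : e₂ = e₃ := by
            have hh := hred (1/2) hhalf
            rw [h14] at hh
            have h' : (e₂-e₃) * Gf α₂ β₂ (1/2) = 0 := by linear_combination hh
            rcases mul_eq_zero.mp h' with h'' | h''
            · linarith
            · exact absurd h'' (ne_of_gt (Gf_pos hhalf))
          exact Or.inr ⟨hα41.symm, hβ41.symm, h14, hα32.symm, hβ32.symm, h23⟩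
        · exfalso
          have h2 := two_term (sub_ne_zero.mpr h14)
            (fun x hx => by linear_combination hred x hx :
              ∀ x ∈ Set.Ioo (0:ℝ) 1, (e₁-e₄) * Gf α₁ β₁ x = (e₃-e₂) * Gf α₂ β₂ x)
          exact hp12 ⟨h2.1, h2.2.1⟩
      · -- p₄ = p₂ = p₃ : contradiction
        exact absurd ⟨by linarith, by linarith⟩ hp34
      · refine absurd ⟨⟨-n3, ?_⟩, ⟨-n4, ?_⟩⟩ hnon
        · push_cast; linarith
        · push_cast; linarith
    · -- p₃ integrally shifted from p₁ and p₂
      rcases CL4 with ⟨hu4, hs4⟩ | ⟨hv4, ht4⟩ |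
        ⟨⟨n1, hn1⟩, ⟨n2, hn2⟩, ⟨n3, hn3⟩, ⟨n4, hn4⟩⟩
      · refine absurd ⟨⟨m1, ?_⟩, ⟨m2, ?_⟩⟩ hnon
        · push_cast; linarith
        · push_cast; linarith
      · refine absurd ⟨⟨m3, ?_⟩, ⟨m4, ?_⟩⟩ hnon
        · push_cast; linarith
        · push_cast; linarith
      · refine absurd ⟨⟨m1 - n1, ?_⟩, ⟨m2 - n2, ?_⟩⟩ hnon
        · push_cast; linarith
        · push_cast; linarith
  · -- some coefficient is non-zero : rationality route, contradiction with hnon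
    exfalso
    have key : ∀ x ∈ Set.Ioo (0:ℝ) 1,
        ((e₃ * qc0 (α₃-α₁) ((α₃+β₃)-(α₁+β₁)) (α₃-α₂) ((α₃+β₃)-(α₂+β₂)))
          + (e₃ * qc1 (α₃-α₁) ((α₃+β₃)-(α₁+β₁)) (α₃-α₂) ((α₃+β₃)-(α₂+β₂))) * x
          + (e₃ * qc2 (α₃-α₁) ((α₃+β₃)-(α₁+β₁)) (α₃-α₂) ((α₃+β₃)-(α₂+β₂))) * x^2
          + (e₃ * qc3 (α₃-α₁) ((α₃+β₃)-(α₁+β₁)) (α₃-α₂) ((α₃+β₃)-(α₂+β₂))) * x^3)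
          * (x ^ (α₃-α₄) * (1-x) ^ (β₃-β₄))
        = (-(e₄ * qc0 (α₄-α₁) ((α₄+β₄)-(α₁+β₁)) (α₄-α₂) ((α₄+β₄)-(α₂+β₂))))
          + (-(e₄ * qc1 (α₄-α₁) ((α₄+β₄)-(α₁+β₁)) (α₄-α₂) ((α₄+β₄)-(α₂+β₂)))) * x
          + (-(e₄ * qc2 (α₄-α₁) ((α₄+β₄)-(α₁+β₁)) (α₄-α₂) ((α₄+β₄)-(α₂+β₂)))) * x^2
          + (-(e₄ * qc3 (α₄-α₁) ((α₄+β₄)-(α₁+β₁)) (α₄-α₂) ((α₄+β₄)-(α₂+β₂)))) * x^3 := by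
      intro x hx
      have hx0 : 0 < x := hx.1
      have hx1 : 0 < 1 - x := by have := hx.2; linarith
      have ex : x ^ (α₃-α₄) * x ^ α₄ = x ^ α₃ := by
        rw [← Real.rpow_add hx0]; congr 1; ring
      have ey : (1-x) ^ (β₃-β₄) * (1-x) ^ β₄ = (1-x) ^ β₃ := by
        rw [← Real.rpow_add hx1]; congr 1; ring
      have hAx := hAn x hx
      simp only [Qc, Gf] at hAx
      rw [← ex, ← ey] at hAx
      apply mul_right_cancel₀ (ne_of_gt (Gf_pos (α := α₄) (β := β₄) hx))
      simp only [Gf]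
      linear_combination (-1 : ℝ) * hAx
    have hAne : ¬((e₃ * qc0 (α₃-α₁) ((α₃+β₃)-(α₁+β₁)) (α₃-α₂) ((α₃+β₃)-(α₂+β₂))) = 0
        ∧ (e₃ * qc1 (α₃-α₁) ((α₃+β₃)-(α₁+β₁)) (α₃-α₂) ((α₃+β₃)-(α₂+β₂))) = 0
        ∧ (e₃ * qc2 (α₃-α₁) ((α₃+β₃)-(α₁+β₁)) (α₃-α₂) ((α₃+β₃)-(α₂+β₂))) = 0
        ∧ (e₃ * qc3 (α₃-α₁) ((α₃+β₃)-(α₁+β₁)) (α₃-α₂) ((α₃+β₃)-(α₂+β₂))) = 0) := by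
      rintro ⟨w0, w1, w2, w3⟩
      have he₃' : e₃ ≠ 0 := ne_of_gt he₃
      exact hq3 ⟨(mul_eq_zero.mp w0).resolve_left he₃',
        (mul_eq_zero.mp w1).resolve_left he₃',
        (mul_eq_zero.mp w2).resolve_left he₃',
        (mul_eq_zero.mp w3).resolve_left he₃'⟩
    obtain ⟨m, hm⟩ := rat_exp hAne key
    obtain ⟨n, hn⟩ := rat_exp_delta hAne key
    exact hnon ⟨⟨m, hm⟩, ⟨n, hn⟩⟩

theorem beta_mixture_identifiable (π₀ a₁ b₁ a₂ b₂ π' a₁' b₁' a₂' b₂' : ℝ)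
    (hπ : π₀ ∈ Set.Ioo (0:ℝ) 1) (hπ' : π' ∈ Set.Ioo (0:ℝ) 1)
    (ha₁ : 0 < a₁) (hb₁ : 0 < b₁) (ha₂ : 0 < a₂) (hb₂ : 0 < b₂)
    (ha₁' : 0 < a₁') (hb₁' : 0 < b₁') (ha₂' : 0 < a₂') (hb₂' : 0 < b₂')
    (hdist : (a₁, b₁) ≠ (a₂, b₂))
    (hnonint : (¬ ∃ m : ℤ, a₁ - a₂ = (m : ℝ)) ∨ (¬ ∃ n : ℤ, b₁ - b₂ = (n : ℝ)))
    (heq : ∀ x ∈ Set.Ioo (0:ℝ) 1,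
      π' * betaDen a₁' b₁' x + (1 - π') * betaDen a₂' b₂' x =
      π₀ * betaDen a₁ b₁ x + (1 - π₀) * betaDen a₂ b₂ x) :
    ({(π₀, a₁, b₁), (1 - π₀, a₂, b₂)} : Set (ℝ × ℝ × ℝ)) =
      {(π', a₁', b₁'), (1 - π', a₂', b₂')} := by
  have hC : ∀ a b : ℝ, 0 < a → 0 < b →
      0 < Real.Gamma (a+b) / (Real.Gamma a * Real.Gamma b) := by
    intro a b ha hb
    exact div_pos (Real.Gamma_pos_of_pos (by linarith))
      (mul_pos (Real.Gamma_pos_of_pos ha) (Real.Gamma_pos_of_pos hb))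
  have hBG : ∀ a b x : ℝ,
      betaDen a b x = (Real.Gamma (a+b) / (Real.Gamma a * Real.Gamma b)) * Gf (a-1) (b-1) x := by
    intro a b x
    simp only [betaDen, Gf]
    ring
  have hE : ∀ x ∈ Set.Ioo (0:ℝ) 1,
      (π' * (Real.Gamma (a₁'+b₁') / (Real.Gamma a₁' * Real.Gamma b₁'))) * Gf (a₁'-1) (b₁'-1) x
      + ((1-π') * (Real.Gamma (a₂'+b₂') / (Real.Gamma a₂' * Real.Gamma b₂'))) * Gf (a₂'-1) (b₂'-1) x
      = (π₀ * (Real.Gamma (a₁+b₁) / (Real.Gamma a₁ * Real.Gamma b₁))) * Gf (a₁-1) (b₁-1) x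
      + ((1-π₀) * (Real.Gamma (a₂+b₂) / (Real.Gamma a₂ * Real.Gamma b₂))) * Gf (a₂-1) (b₂-1) x := by
    intro x hx
    have hh := heq x hx
    rw [hBG, hBG, hBG, hBG] at hh
    linear_combination hh
  have hmain := Lmain (a₁'-1) (b₁'-1) (a₂'-1) (b₂'-1) (a₁-1) (b₁-1) (a₂-1) (b₂-1)
    (π' * (Real.Gamma (a₁'+b₁') / (Real.Gamma a₁' * Real.Gamma b₁')))
    ((1-π') * (Real.Gamma (a₂'+b₂') / (Real.Gamma a₂' * Real.Gamma b₂')))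
    (π₀ * (Real.Gamma (a₁+b₁) / (Real.Gamma a₁ * Real.Gamma b₁)))
    ((1-π₀) * (Real.Gamma (a₂+b₂) / (Real.Gamma a₂ * Real.Gamma b₂)))
    (mul_pos hπ'.1 (hC _ _ ha₁' hb₁'))
    (mul_pos (by have := hπ'.2; linarith) (hC _ _ ha₂' hb₂'))
    (mul_pos hπ.1 (hC _ _ ha₁ hb₁))
    (mul_pos (by have := hπ.2; linarith) (hC _ _ ha₂ hb₂))
    (by
      rintro ⟨h', h''⟩
      apply hdist
      rw [Prod.mk.injEq]
      exact ⟨by linarith, by linarith⟩)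
    (by
      rintro ⟨⟨m, hm⟩, ⟨n, hn⟩⟩
      rcases hnonint with h | h
      · exact h ⟨m, by push_cast at hm ⊢; linarith⟩
      · exact h ⟨n, by push_cast at hn ⊢; linarith⟩)
    hE
  rcases hmain with ⟨h1, h2, h3, h4, h5, h6⟩ | ⟨h1, h2, h3, h4, h5, h6⟩
  · -- straight identification
    have ha1 : a₁' = a₁ := by linarith
    have hb1 : b₁' = b₁ := by linarith
    have ha2 : a₂' = a₂ := by linarith
    have hb2 : b₂' = b₂ := by linarith
    rw [ha1, hb1] at h3
    rw [ha2, hb2] at h6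
    have hπeq : π' = π₀ := mul_right_cancel₀ (ne_of_gt (hC _ _ ha₁ hb₁)) h3
    rw [ha1, hb1, ha2, hb2, hπeq]
  · -- crossed identification
    have ha1 : a₁' = a₂ := by linarith
    have hb1 : b₁' = b₂ := by linarith
    have ha2 : a₂' = a₁ := by linarith
    have hb2 : b₂' = b₁ := by linarith
    rw [ha1, hb1] at h3
    rw [ha2, hb2] at h6
    have hπeq : π' = 1 - π₀ := mul_right_cancel₀ (ne_of_gt (hC _ _ ha₂ hb₂)) h3
    rw [ha1, hb1, ha2, hb2, hπeq, show (1:ℝ) - (1-π₀) = π₀ by ring]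
    exact Set.pair_comm _ _
end
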